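/- Let $K$ be a field of characteristic not $2$, and let $a_1,\ldots,a_n \in K$ be such that for every nonempty subset $I \subseteq \{1,\ldots,n\}$ the product $\prod_{s \in I} a_s$ is not a square in $K$. If $b_1,\ldots,b_n$ are elements of an algebraic closure of $K$ with $b_s^2 = a_s$ for all $s$, then the field extension $K(b_1,\ldots,b_n)$ has degree $2^n$ over $K$. -/

import Mathlib

open Polynomial IntermediateField

lemma besicovich_key {F L : Type*} [Field F] [Field L] [Algebra F L]
    (h2 : (2:F) ≠ 0) (a c : F) (b0 : L) (hb : b0 ^ 2 = algebraMap F L a)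
    (hna : ¬∃ x : F, a = x ^ 2) (x : L) (hx : x ∈ IntermediateField.adjoin F {b0})
    (hxc : x ^ 2 = algebraMap F L c) :
    (∃ y : F, c = y ^ 2) ∨ (∃ y : F, a * c = y ^ 2) := by
  have hint : IsIntegral F b0 :=
    ⟨X ^ 2 - C a, monic_X_pow_sub_C a two_ne_zero, by simp [hb]⟩
  have hmem : x ∈ Algebra.adjoin F {b0} := by
    rw [← IntermediateField.adjoin_simple_toSubalgebra_of_isAlgebraic hint.isAlgebraic]
    exact hx
  rw [Algebra.adjoin_singleton_eq_range_aeval] at hmem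
  obtain ⟨f, hf⟩ := hmem
  replace hf : aeval b0 f = x := hf
  set m : F[X] := X ^ 2 - C a with hm
  have hmonic : m.Monic := monic_X_pow_sub_C a two_ne_zero
  have hdeg : (f %ₘ m).degree < 2 := by
    have := degree_modByMonic_lt f hmonic
    rwa [hm, degree_X_pow_sub_C (by norm_num) a] at this
  have hdeg1 : (f %ₘ m).degree ≤ 1 := by
    rcases h : (f %ₘ m).degree with _ | d
    · exact bot_le
    · rw [h] at hdeg
      change ((d:ℕ):WithBot ℕ) < 2 at hdeg
      have hd2 : d < 2 := by exact_mod_cast hdeg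
      have hd1 : d ≤ 1 := Nat.lt_succ_iff.mp hd2
      show ((d:ℕ):WithBot ℕ) ≤ 1
      exact_mod_cast hd1
  set p : F := (f %ₘ m).coeff 0
  set q : F := (f %ₘ m).coeff 1
  have haev : x = algebraMap F L q * b0 + algebraMap F L p := by
    have h1 : aeval b0 m = 0 := by simp [hm, hb]
    have : aeval b0 (f %ₘ m) = x := by
      conv_rhs => rw [← hf, ← modByMonic_add_div f m]
      rw [map_add, map_mul, h1, zero_mul, add_zero]
    rw [← this]
    conv_lhs => rw [eq_X_add_C_of_degree_le_one hdeg1]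
    rw [map_add, map_mul, aeval_C, aeval_C, aeval_X]
  -- x^2 = (a q^2 + p^2) + (2 p q) b0
  have hsq : algebraMap F L (2 * p * q) * b0 =
      algebraMap F L (c - (a * q ^ 2 + p ^ 2)) := by
    have : x ^ 2 = algebraMap F L (a * q ^ 2 + p ^ 2) +
        algebraMap F L (2 * p * q) * b0 := by
      rw [haev]; ring_nf
      rw [hb]
      push_cast [map_add, map_mul, map_pow, map_ofNat]
      ring
    rw [map_sub, eq_sub_iff_add_eq, ← hxc, this]
    ring
  by_cases hpq : 2 * p * q = 0
  · have h0 : p = 0 ∨ q = 0 := by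
      rcases mul_eq_zero.mp hpq with h | h
      · exact Or.inl ((mul_eq_zero.mp h).resolve_left h2)
      · exact Or.inr h
    have hc : c = a * q ^ 2 + p ^ 2 := by
      rw [hpq, map_zero, zero_mul] at hsq
      have h0' : c - (a * q ^ 2 + p ^ 2) = 0 :=
        (algebraMap F L).injective (by rw [← hsq, map_zero])
      exact sub_eq_zero.mp h0'
    rcases h0 with h | h
    · right
      refine ⟨a * q, ?_⟩
      rw [hc, h]
      ring
    · left
      exact ⟨p, by rw [hc, h]; ring⟩
  · exfalso
    have hB : algebraMap F L (2 * p * q) ≠ 0 := fun h =>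
      hpq ((algebraMap F L).injective (by rw [h, map_zero]))
    have hb0 : b0 = algebraMap F L ((c - (a * q ^ 2 + p ^ 2)) / (2 * p * q)) := by
      rw [map_div₀, eq_div_iff hB, mul_comm]
      exact hsq
    apply hna
    refine ⟨(c - (a * q ^ 2 + p ^ 2)) / (2 * p * q), ?_⟩
    have : algebraMap F L a = algebraMap F L (((c - (a * q ^ 2 + p ^ 2)) / (2 * p * q)) ^ 2) := by
      rw [← hb, hb0, map_pow]
    exact (algebraMap F L).injective this

universe u

theorem besicovich_aux : ∀ (n : ℕ) (K L : Type u) [Field K] [Field L] [Algebra K L]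
    (_ : (2:K) ≠ 0) (a : Fin n → K)
    (_ : ∀ I : Finset (Fin n), I.Nonempty → ¬∃ x : K, ∏ s ∈ I, a s = x ^ 2)
    (b : Fin n → L) (_ : ∀ s, b s ^ 2 = algebraMap K L (a s)),
    Module.finrank K (IntermediateField.adjoin K (Set.range b)) = 2 ^ n := by
  intro n
  induction n with
  | zero =>
    intro K L _ _ _ h2 a ha b hb
    rw [Set.range_eq_empty b, IntermediateField.adjoin_empty,
      IntermediateField.finrank_bot, pow_zero]
  | succ n ih =>
    intro K L _ _ _ h2 a ha b hb
    have hna0 : ¬∃ x : K, a 0 = x ^ 2 := by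
      have := ha {0} ⟨0, Finset.mem_singleton_self 0⟩
      simpa using this
    have hint : IsIntegral K (b 0) :=
      ⟨X ^ 2 - C (a 0), monic_X_pow_sub_C _ two_ne_zero, by simp [hb 0]⟩
    have hirr : Irreducible (X ^ 2 - C (a 0)) :=
      X_pow_sub_C_irreducible_of_prime Nat.prime_two (fun y hy => hna0 ⟨y, hy.symm⟩)
    have hmin : minpoly K (b 0) = X ^ 2 - C (a 0) :=
      (minpoly.eq_of_irreducible_of_monic hirr (by simp [hb 0])
        (monic_X_pow_sub_C _ two_ne_zero)).symm
    have hfr : Module.finrank K K⟮b 0⟯ = 2 := by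
      rw [IntermediateField.adjoin.finrank hint, hmin, natDegree_X_pow_sub_C]
    haveI : FiniteDimensional K K⟮b 0⟯ := IntermediateField.adjoin.finiteDimensional hint
    set K' : IntermediateField K L := K⟮b 0⟯ with hK'
    let a' : Fin n → K' := fun s => algebraMap K K' (a s.succ)
    let b' : Fin n → L := fun s => b s.succ
    have h2' : (2:K') ≠ 0 := by
      intro h
      apply h2
      apply (algebraMap K K').injective
      rw [map_zero, map_ofNat]
      exact h
    have hb' : ∀ s, b' s ^ 2 = algebraMap K' L (a' s) := fun s => by
      show b s.succ ^ 2 = algebraMap K' L (algebraMap K K' (a s.succ))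
      rw [← IsScalarTower.algebraMap_apply K K' L]
      exact hb s.succ
    have ha' : ∀ I : Finset (Fin n), I.Nonempty → ¬∃ x : K', ∏ s ∈ I, a' s = x ^ 2 := by
      rintro I hI ⟨x, hx⟩
      have hprod : (∏ s ∈ I, a' s) = algebraMap K K' (∏ s ∈ I, a s.succ) := by
        rw [map_prod]
      have hxL : (x : L) ^ 2 = algebraMap K L (∏ s ∈ I, a s.succ) := by
        have h3 := congrArg (algebraMap K' L) hx
        rw [hprod, ← IsScalarTower.algebraMap_apply K K' L, map_pow] at h3
        exact h3.symm
      have hxmem : (x : L) ∈ IntermediateField.adjoin K {b 0} := x.2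
      have h0notmem : (0 : Fin (n+1)) ∉ I.map (Fin.succEmb n) := by
        simp only [Finset.mem_map, not_exists]
        rintro s ⟨_, hs0⟩
        exact Fin.succ_ne_zero s hs0
      rcases besicovich_key h2 (a 0) (∏ s ∈ I, a s.succ) (b 0) (hb 0) hna0
          (x : L) hxmem hxL with ⟨y, hy⟩ | ⟨y, hy⟩
      · exact ha (I.map (Fin.succEmb n)) (Finset.Nonempty.map hI)
          ⟨y, by rw [Finset.prod_map]; exact hy⟩
      · refine ha (insert 0 (I.map (Fin.succEmb n))) ⟨0, Finset.mem_insert_self 0 _⟩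
          ⟨y, ?_⟩
        rw [Finset.prod_insert h0notmem, Finset.prod_map]
        exact hy
    have hIH := ih K' L h2' a' ha' b' hb'
    have hrange : Set.range b = {b 0} ∪ Set.range b' := by
      rw [Fin.range_fin_succ, Set.insert_eq]
      rfl
    have hadj : (IntermediateField.adjoin K' (Set.range b')).restrictScalars K
        = IntermediateField.adjoin K (Set.range b) := by
      rw [hK', IntermediateField.adjoin_adjoin_left, ← hrange]
    have htower : Module.finrank K (IntermediateField.adjoin K' (Set.range b'))
        = Module.finrank K K' *
          Module.finrank K' (IntermediateField.adjoin K' (Set.range b')) :=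
      (Module.finrank_mul_finrank K K' _).symm
    have hsame : Module.finrank K
          ((IntermediateField.adjoin K' (Set.range b')).restrictScalars K)
        = Module.finrank K (IntermediateField.adjoin K' (Set.range b')) := rfl
    rw [← hadj, hsame, htower, hfr, hIH, pow_succ, mul_comm]

theorem besicovich (K : Type*) [Field K] (hchar : ringChar K ≠ 2) (n : ℕ)
    (a : Fin n → K)
    (ha : ∀ I : Finset (Fin n), I.Nonempty → ¬∃ x : K, ∏ s ∈ I, a s = x ^ 2)
    (b : Fin n → AlgebraicClosure K)
    (hb : ∀ s, (b s) ^ 2 = algebraMap K (AlgebraicClosure K) (a s)) :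
    Module.finrank K (IntermediateField.adjoin K (Set.range b)) = 2 ^ n :=
  besicovich_aux n K (AlgebraicClosure K) (Ring.two_ne_zero hchar) a ha b hb
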